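/- Symmetrization vacancy: for the band integral, ∫_{1/(1−ε)}^∞ (t^{α−1} − t^{n−1}) (∫_{−1}^1 (1−s²)^{(n−3)/2} (t² + 1 − 2st)^{−(n+α)/2} ds) dt = ∫_0^{1−ε} (t^{n−1} − t^{α−1}) (∫_{−1}^1 (1−s²)^{(n−3)/2} (1 + t² − 2st)^{−(n+α)/2} ds) dt for all 0 < ε < 1; consequently ∫_{([1−ε, 1/(1−ε)])^c ∩ [0,∞)} (t^{α−1} − t^{n−1}) ∫_{−1}^1 (1−s²)^{(n−3)/2}(t²+1−2st)^{−(n+α)/2} ds dt = 0. -/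

import Mathlib

open MeasureTheory intervalIntegral Set Real

/-- The angular weight `(1-s²)^e` is interval integrable on `[-1,1]` for `e > -1`. -/
lemma aux_weight_intble {e : ℝ} (he : -1 < e) :
    IntervalIntegrable (fun s : ℝ => (1 - s ^ 2) ^ e) volume (-1) 1 := by
  have h1 : IntervalIntegrable (fun s : ℝ => (1 - s) ^ e) volume (-1) 1 := by
    have := (intervalIntegrable_rpow' (a := 0) (b := 2) he).comp_sub_left 1
    norm_num at this
    exact this.symm
  have h2 : IntervalIntegrable (fun s : ℝ => (1 + s) ^ e) volume (-1) 1 := by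
    have := (intervalIntegrable_rpow' (a := 0) (b := 2) he).comp_add_right 1
    norm_num at this
    simpa [add_comm] using this
  have hg : IntervalIntegrable (fun s : ℝ => (1 - s) ^ e + ((1 + s) ^ e + 1)) volume (-1) 1 :=
    h1.add (h2.add intervalIntegrable_const)
  apply hg.mono_fun
  · exact (by fun_prop : Measurable fun s : ℝ => (1 - s ^ 2) ^ e).aestronglyMeasurable
  · have hne : ∀ᵐ s : ℝ ∂(volume.restrict (Set.uIoc (-1:ℝ) 1)), s ≠ 1 := by
      refine ae_restrict_of_ae ?_
      rw [ae_iff]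
      have : {x : ℝ | ¬ x ≠ 1} = {1} := by ext x; simp
      rw [this]; exact measure_singleton 1
    filter_upwards [ae_restrict_mem measurableSet_uIoc, hne] with s hs hs1
    rw [Set.uIoc_of_le (by norm_num : (-1:ℝ) ≤ 1)] at hs
    have hs1' : s < 1 := lt_of_le_of_ne hs.2 hs1
    have hsm : (-1:ℝ) < s := hs.1
    have hnn : (0:ℝ) ≤ 1 - s ^ 2 := by nlinarith
    rw [Real.norm_eq_abs, Real.norm_eq_abs, abs_of_nonneg (rpow_nonneg hnn e),
      abs_of_nonneg (by
        have g1 : (0:ℝ) ≤ (1 - s) ^ e := rpow_nonneg (by linarith) e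
        have g2 : (0:ℝ) ≤ (1 + s) ^ e := rpow_nonneg (by linarith) e
        linarith)]
    rcases le_or_gt 0 e with h0 | h0
    · have : (1 - s ^ 2) ^ e ≤ 1 := Real.rpow_le_one hnn (by nlinarith) h0
      have g1 : (0:ℝ) ≤ (1 - s) ^ e := rpow_nonneg (by linarith) e
      have g2 : (0:ℝ) ≤ (1 + s) ^ e := rpow_nonneg (by linarith) e
      linarith
    · rcases le_or_gt s 0 with hs0 | hs0
      · have : (1 - s ^ 2) ^ e ≤ (1 + s) ^ e :=
          Real.rpow_le_rpow_of_nonpos (by linarith) (by nlinarith) h0.le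
        have g1 : (0:ℝ) ≤ (1 - s) ^ e := rpow_nonneg (by linarith) e
        linarith
      · have : (1 - s ^ 2) ^ e ≤ (1 - s) ^ e :=
          Real.rpow_le_rpow_of_nonpos (by linarith) (by nlinarith) h0.le
        have g2 : (0:ℝ) ≤ (1 + s) ^ e := rpow_nonneg (by linarith) e
        linarith

/-- The inner angular integral. -/
noncomputable def inn (e r t : ℝ) : ℝ :=
  ∫ s in (-1:ℝ)..1, (1 - s ^ 2) ^ e * (t ^ 2 + 1 - 2 * s * t) ^ r

lemma inn_comm (e r t : ℝ) :
    (∫ s in (-1:ℝ)..1, (1 - s ^ 2) ^ e * (1 + t ^ 2 - 2 * s * t) ^ r) = inn e r t :=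
  intervalIntegral.integral_congr fun s _ => by
    rw [show 1 + t ^ 2 - 2 * s * t = t ^ 2 + 1 - 2 * s * t from by ring]

lemma measurable_inn (e r : ℝ) : Measurable (inn e r) := by
  have h : (inn e r) = fun t => ∫ s in Ioc (-1:ℝ) 1,
      (1 - s ^ 2) ^ e * (t ^ 2 + 1 - 2 * s * t) ^ r := by
    funext t
    rw [inn, intervalIntegral.integral_of_le (by norm_num : (-1:ℝ) ≤ 1)]
  rw [h]
  have hf : StronglyMeasurable fun p : ℝ × ℝ =>
      (1 - p.2 ^ 2) ^ e * (p.1 ^ 2 + 1 - 2 * p.2 * p.1) ^ r :=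
    (by fun_prop : Measurable fun p : ℝ × ℝ =>
      (1 - p.2 ^ 2) ^ e * (p.1 ^ 2 + 1 - 2 * p.2 * p.1) ^ r).stronglyMeasurable
  exact (hf.integral_prod_right' (ν := volume.restrict (Ioc (-1:ℝ) 1))).measurable

/-- Inner integrand integrability, upper bound and nonnegativity, given a positive lower
bound `c` on the quadratic. -/
lemma inn_bound {e r t c : ℝ} (he : -1 < e) (hr : r ≤ 0) (hc0 : 0 < c)
    (hc : ∀ s ∈ Icc (-1:ℝ) 1, c ≤ t ^ 2 + 1 - 2 * s * t) :
    IntervalIntegrable (fun s => (1 - s ^ 2) ^ e * (t ^ 2 + 1 - 2 * s * t) ^ r) volume (-1) 1 ∧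
    inn e r t ≤ c ^ r * ∫ s in (-1:ℝ)..1, (1 - s ^ 2) ^ e ∧ 0 ≤ inn e r t := by
  have hM := aux_weight_intble he
  have hMc : IntervalIntegrable (fun s : ℝ => c ^ r * (1 - s ^ 2) ^ e) volume (-1) 1 :=
    hM.const_mul _
  have hbound : ∀ s ∈ Icc (-1:ℝ) 1,
      (1 - s ^ 2) ^ e * (t ^ 2 + 1 - 2 * s * t) ^ r ≤ c ^ r * (1 - s ^ 2) ^ e := by
    intro s hs
    have hnn : (0:ℝ) ≤ 1 - s ^ 2 := by
      have := hs.1; have := hs.2; nlinarith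
    have h1 : (t ^ 2 + 1 - 2 * s * t) ^ r ≤ c ^ r :=
      Real.rpow_le_rpow_of_nonpos hc0 (hc s hs) hr
    calc (1 - s ^ 2) ^ e * (t ^ 2 + 1 - 2 * s * t) ^ r
        ≤ (1 - s ^ 2) ^ e * c ^ r := by
          exact mul_le_mul_of_nonneg_left h1 (rpow_nonneg hnn e)
      _ = c ^ r * (1 - s ^ 2) ^ e := mul_comm _ _
  have hnonneg : ∀ s ∈ Icc (-1:ℝ) 1,
      0 ≤ (1 - s ^ 2) ^ e * (t ^ 2 + 1 - 2 * s * t) ^ r := by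
    intro s hs
    have hnn : (0:ℝ) ≤ 1 - s ^ 2 := by have := hs.1; have := hs.2; nlinarith
    have : (0:ℝ) < t ^ 2 + 1 - 2 * s * t := lt_of_lt_of_le hc0 (hc s hs)
    exact mul_nonneg (rpow_nonneg hnn e) (rpow_nonneg this.le r)
  have hint : IntervalIntegrable
      (fun s => (1 - s ^ 2) ^ e * (t ^ 2 + 1 - 2 * s * t) ^ r) volume (-1) 1 := by
    apply hMc.mono_fun
    · exact (by fun_prop : Measurable fun s : ℝ =>
        (1 - s ^ 2) ^ e * (t ^ 2 + 1 - 2 * s * t) ^ r).aestronglyMeasurable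
    · filter_upwards [ae_restrict_mem measurableSet_uIoc] with s hs
      rw [Set.uIoc_of_le (by norm_num : (-1:ℝ) ≤ 1)] at hs
      have hs' : s ∈ Icc (-1:ℝ) 1 := ⟨hs.1.le, hs.2⟩
      rw [Real.norm_eq_abs, Real.norm_eq_abs, abs_of_nonneg (hnonneg s hs'),
        abs_of_nonneg (le_trans (hnonneg s hs') (hbound s hs'))]
      exact hbound s hs'
  refine ⟨hint, ?_, ?_⟩
  · have := intervalIntegral.integral_mono_on (by norm_num : (-1:ℝ) ≤ 1) hint hMc hbound
    rwa [intervalIntegral.integral_const_mul] at this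
  · exact intervalIntegral.integral_nonneg (by norm_num) hnonneg

lemma inn_inv {e r x : ℝ} (hx0 : 0 < x) :
    inn e r x⁻¹ = inn e r x * x ^ (-(2 * r)) := by
  rw [inn, inn, ← intervalIntegral.integral_mul_const]
  apply intervalIntegral.integral_congr
  intro s hs
  rw [Set.uIcc_of_le (by norm_num : (-1:ℝ) ≤ 1)] at hs
  have hs1 : s ≤ 1 := hs.2
  have hnum : (0:ℝ) ≤ x ^ 2 + 1 - 2 * s * x := by nlinarith [sq_nonneg (x - 1)]
  have hbase : (x⁻¹) ^ 2 + 1 - 2 * s * x⁻¹ = (x ^ 2 + 1 - 2 * s * x) / x ^ 2 := by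
    field_simp
    ring
  show (1 - s ^ 2) ^ e * ((x⁻¹) ^ 2 + 1 - 2 * s * x⁻¹) ^ r
      = (1 - s ^ 2) ^ e * (x ^ 2 + 1 - 2 * s * x) ^ r * x ^ (-(2 * r))
  rw [hbase, Real.div_rpow hnum (sq_nonneg x), ← Real.rpow_natCast x 2,
    ← Real.rpow_mul hx0.le, div_eq_mul_inv, ← Real.rpow_neg hx0.le, mul_assoc]
  norm_num [mul_assoc]

lemma quad_lower {t b s : ℝ} (ht0 : 0 < t) (htb : t ≤ b) (hb1 : b < 1)
    (hs : s ∈ Icc (-1:ℝ) 1) : (1 - b) ^ 2 ≤ t ^ 2 + 1 - 2 * s * t := by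
  have hs1 : s ≤ 1 := hs.2
  nlinarith [sq_nonneg (1 - t), sq_nonneg (t - b)]

lemma main_integrableOn {e r p p' b : ℝ} (he : -1 < e) (hr : r ≤ 0) (hp : -1 < p)
    (hp' : -1 < p') (hb0 : 0 < b) (hb1 : b < 1) :
    IntegrableOn (fun t => (t ^ p - t ^ p') * inn e r t) (Ioo 0 b) volume := by
  set M : ℝ := ∫ s in (-1:ℝ)..1, (1 - s ^ 2) ^ e with hM
  have hM0 : 0 ≤ M :=
    intervalIntegral.integral_nonneg (by norm_num) fun s hs => by
      have := hs.1; have := hs.2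
      exact rpow_nonneg (by nlinarith) e
  set c : ℝ := (1 - b) ^ 2 with hcdef
  have hc0 : 0 < c := by
    have : (0:ℝ) < 1 - b := by linarith
    positivity
  have hdom : IntegrableOn (fun t : ℝ => (t ^ p + t ^ p') * (c ^ r * M)) (Ioo 0 b) volume := by
    have := ((intervalIntegrable_rpow' (a := 0) (b := b) hp).add
      (intervalIntegrable_rpow' (a := 0) (b := b) hp')).mul_const (c ^ r * M)
    rwa [intervalIntegrable_iff_integrableOn_Ioo_of_le hb0.le] at this
  apply Integrable.mono' hdom
  · apply AEStronglyMeasurable.restrict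
    apply Measurable.aestronglyMeasurable
    exact ((by fun_prop : Measurable fun t : ℝ => t ^ p - t ^ p').mul (measurable_inn e r))
  · filter_upwards [ae_restrict_mem measurableSet_Ioo] with t ht
    have ht0 : 0 < t := ht.1
    obtain ⟨-, hle, hpos⟩ := inn_bound (t := t) he hr hc0
      (fun s hs => quad_lower ht0 ht.2.le hb1 hs)
    have habs : |t ^ p - t ^ p'| ≤ t ^ p + t ^ p' := by
      have h1 : (0:ℝ) ≤ t ^ p := rpow_nonneg ht0.le p
      have h2 : (0:ℝ) ≤ t ^ p' := rpow_nonneg ht0.le p'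
      rw [abs_sub_le_iff]; constructor <;> linarith
    have hinn : |inn e r t| ≤ c ^ r * M := by rw [abs_of_nonneg hpos]; exact hle
    rw [Real.norm_eq_abs, abs_mul]
    calc |t ^ p - t ^ p'| * |inn e r t| ≤ (t ^ p + t ^ p') * (c ^ r * M) := by
          apply mul_le_mul habs hinn (abs_nonneg _)
          have h1 : (0:ℝ) ≤ t ^ p := rpow_nonneg ht0.le p
          have h2 : (0:ℝ) ≤ t ^ p' := rpow_nonneg ht0.le p'
          linarith
      _ = (t ^ p + t ^ p') * (c ^ r * M) := rfl


/-- Symmetrization identity for the band integral under `t ↦ 1/t`, and the consequent vanishing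
of the integral over the complement of `[1−ε, 1/(1−ε)]` in `[0,∞)`. -/
theorem band_integral_symmetrization (n : ℕ) (hn : 2 ≤ n) (α ε : ℝ) (hα0 : 0 < α)
    (hα2 : α < 2) (hε0 : 0 < ε) (hε1 : ε < 1) :
    (∫ t in Set.Ioi (1 / (1 - ε)), (t ^ (α - 1) - t ^ ((n : ℝ) - 1)) *
        ∫ s in (-1 : ℝ)..1,
          (1 - s ^ 2) ^ (((n : ℝ) - 3) / 2) * (t ^ 2 + 1 - 2 * s * t) ^ (-((n : ℝ) + α) / 2)) =
      (∫ t in (0 : ℝ)..(1 - ε), (t ^ ((n : ℝ) - 1) - t ^ (α - 1)) *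
        ∫ s in (-1 : ℝ)..1,
          (1 - s ^ 2) ^ (((n : ℝ) - 3) / 2) * (1 + t ^ 2 - 2 * s * t) ^ (-((n : ℝ) + α) / 2)) ∧
    (∫ t in Set.Ici (0 : ℝ) \ Set.Icc (1 - ε) (1 / (1 - ε)),
        (t ^ (α - 1) - t ^ ((n : ℝ) - 1)) *
        ∫ s in (-1 : ℝ)..1,
          (1 - s ^ 2) ^ (((n : ℝ) - 3) / 2) * (t ^ 2 + 1 - 2 * s * t) ^ (-((n : ℝ) + α) / 2)) = 0 := by
  have h2n : (2:ℝ) ≤ (n:ℝ) := by exact_mod_cast hn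
  set e := ((n:ℝ) - 3) / 2 with he_def
  set r := -((n:ℝ) + α) / 2 with hr_def
  have he : -1 < e := by rw [he_def]; linarith
  have hr : r ≤ 0 := by rw [hr_def]; linarith
  set b := 1 - ε with hb_def
  set a := 1 / b with ha_def
  have hb0 : 0 < b := by rw [hb_def]; linarith
  have hb1 : b < 1 := by rw [hb_def]; linarith
  have ha0 : 0 < a := by rw [ha_def]; positivity
  have ha1 : 1 < a := by rw [ha_def, lt_div_iff₀ hb0, one_mul]; exact hb1
  have hainv : a⁻¹ = b := by rw [ha_def, one_div, inv_inv]
  have hinn_def : ∀ t : ℝ,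
      (∫ s in (-1:ℝ)..1, (1 - s ^ 2) ^ e * (t ^ 2 + 1 - 2 * s * t) ^ r) = inn e r t :=
    fun t => rfl
  simp only [hinn_def, inn_comm]
  have hpa1 : (-1:ℝ) < α - 1 := by linarith
  have hpn1 : (-1:ℝ) < (n:ℝ) - 1 := by linarith
  -- change of variables data for `x ↦ x⁻¹` on `Ioi a`
  have hderiv : ∀ x ∈ Ioi a, HasDerivWithinAt (fun y : ℝ => y⁻¹) (-(x ^ 2)⁻¹) (Ioi a) x :=
    fun x hx => (hasDerivAt_inv (ha0.trans hx).ne').hasDerivWithinAt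
  have hinj : InjOn (fun y : ℝ => y⁻¹) (Ioi a) := fun x _ y _ h => inv_injective h
  have himg : (fun y : ℝ => y⁻¹) '' Ioi a = Ioo 0 b := by
    rw [show (fun y : ℝ => y⁻¹) = (·⁻¹) from rfl, Set.image_inv_eq_inv, Set.inv_Ioi₀ ha0, hainv]
  have hpoint : ∀ x ∈ Ioi a,
      |(-(x ^ 2)⁻¹)| • ((x⁻¹ ^ ((n:ℝ) - 1) - x⁻¹ ^ (α - 1)) * inn e r x⁻¹)
        = (x ^ (α - 1) - x ^ ((n:ℝ) - 1)) * inn e r x := by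
    intro x hx
    have hx1 : 1 < x := ha1.trans hx
    have hx0 : 0 < x := zero_lt_one.trans hx1
    have hinv : ∀ c : ℝ, (x⁻¹) ^ c = x ^ (-c) := fun c => by
      rw [Real.inv_rpow hx0.le, ← Real.rpow_neg hx0.le]
    have h2 : |(-(x ^ 2)⁻¹)| = x ^ (-2:ℝ) := by
      rw [abs_neg, abs_of_nonneg (by positivity), ← Real.rpow_natCast x 2,
        ← Real.rpow_neg hx0.le]
      norm_num
    have key : ∀ c d : ℝ, x ^ (-2:ℝ) * (x ^ (-c) * x ^ d) = x ^ (d - 2 - c) := fun c d => by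
      rw [← Real.rpow_add hx0, ← Real.rpow_add hx0]; congr 1; ring
    rw [inn_inv hx0, hinv, hinv, h2, smul_eq_mul]
    calc x ^ (-2:ℝ) * ((x ^ (-((n:ℝ) - 1)) - x ^ (-(α - 1))) * (inn e r x * x ^ (-(2 * r))))
        = (x ^ (-2:ℝ) * (x ^ (-((n:ℝ) - 1)) * x ^ (-(2 * r)))
            - x ^ (-2:ℝ) * (x ^ (-(α - 1)) * x ^ (-(2 * r)))) * inn e r x := by ring
      _ = (x ^ (-(2 * r) - 2 - ((n:ℝ) - 1)) - x ^ (-(2 * r) - 2 - (α - 1))) * inn e r x := by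
          rw [key, key]
      _ = (x ^ (α - 1) - x ^ ((n:ℝ) - 1)) * inn e r x := by
          rw [show -(2 * r) - 2 - ((n:ℝ) - 1) = α - 1 from by rw [hr_def]; ring,
            show -(2 * r) - 2 - (α - 1) = (n:ℝ) - 1 from by rw [hr_def]; ring]
  have hG'int : IntegrableOn (fun t => (t ^ ((n:ℝ) - 1) - t ^ (α - 1)) * inn e r t)
      (Ioo 0 b) volume := main_integrableOn he hr hpn1 hpa1 hb0 hb1
  have hsub := integral_image_eq_integral_abs_deriv_smul measurableSet_Ioi hderiv hinj
    (fun t => (t ^ ((n:ℝ) - 1) - t ^ (α - 1)) * inn e r t)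
  rw [himg] at hsub
  have hIoi : (∫ t in Ioi a, (t ^ (α - 1) - t ^ ((n:ℝ) - 1)) * inn e r t)
      = ∫ t in Ioo 0 b, (t ^ ((n:ℝ) - 1) - t ^ (α - 1)) * inn e r t := by
    rw [hsub]
    exact (setIntegral_congr_fun measurableSet_Ioi fun x hx => (hpoint x hx).symm)
  constructor
  · rw [hIoi, intervalIntegral.integral_of_le hb0.le, integral_Ioc_eq_integral_Ioo]
  · have hS : Ici (0:ℝ) \ Icc b a = Ico 0 b ∪ Ioi a := by
      ext x
      simp only [mem_diff, mem_Ici, mem_Icc, not_and, not_le, mem_union, mem_Ico, mem_Ioi]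
      constructor
      · rintro ⟨h0, h⟩
        rcases lt_or_ge x b with hxb | hxb
        · exact Or.inl ⟨h0, hxb⟩
        · exact Or.inr (h hxb)
      · rintro (⟨h0, hxb⟩ | hax)
        · exact ⟨h0, fun hb => absurd hxb (not_lt.mpr hb)⟩
        · exact ⟨(ha0.trans hax).le, fun _ => hax⟩
    have hdisj : Disjoint (Ico (0:ℝ) b) (Ioi a) := by
      rw [Set.disjoint_left]
      intro x h1 h2
      have := h1.2
      have := mem_Ioi.mp h2
      linarith
    have hFIco : IntegrableOn (fun t => (t ^ (α - 1) - t ^ ((n:ℝ) - 1)) * inn e r t)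
        (Ico 0 b) volume :=
      (integrableOn_Ico_iff_integrableOn_Ioo (a := 0) (b := b)).mpr (main_integrableOn he hr hpa1 hpn1 hb0 hb1)
    have hFIoi : IntegrableOn (fun t => (t ^ (α - 1) - t ^ ((n:ℝ) - 1)) * inn e r t)
        (Ioi a) volume := by
      have h1 := hG'int
      rw [← himg] at h1
      have h2 := (integrableOn_image_iff_integrableOn_abs_deriv_smul measurableSet_Ioi hderiv
        hinj (fun t => (t ^ ((n:ℝ) - 1) - t ^ (α - 1)) * inn e r t)).mp h1
      exact h2.congr_fun (fun x hx => hpoint x hx) measurableSet_Ioi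
    rw [hS, setIntegral_union hdisj measurableSet_Ioi hFIco hFIoi, hIoi,
      integral_Ico_eq_integral_Ioo]
    have : (∫ t in Ioo (0:ℝ) b, (t ^ (α - 1) - t ^ ((n:ℝ) - 1)) * inn e r t)
        = - ∫ t in Ioo (0:ℝ) b, (t ^ ((n:ℝ) - 1) - t ^ (α - 1)) * inn e r t := by
      rw [← MeasureTheory.integral_neg]
      exact setIntegral_congr_fun measurableSet_Ioo fun x _ => by ring
    rw [this]
    ring
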